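/- Let φ₀, φ₁, φ₂ : ℝ → Matrix (Fin n) (Fin n) ℂ be differentiable functions satisfying the symmetric Nahm system dφ₀/dt = -½[φ₁,φ₀], dφ₁/dt = [φ₀,φ₂], dφ₂/dt = ½[φ₁,φ₂] for all t. Then for every z ∈ ℂ the characteristic polynomial of φ(z,t) = φ₀(t) + z·φ₁(t) + z²·φ₂(t) is independent of t; that is, for all s, t ∈ ℝ, charpoly(φ(z,s)) = charpoly(φ(z,t)). In particular the coefficients of the characteristic polynomial of φ(z,·) are conserved quantities of Nahm's equations. -/

import Mathlib

open Matrix Polynomial Finset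

private lemma eval_charpoly_aux {n : ℕ} (M : Matrix (Fin n) (Fin n) ℂ) (x : ℂ) :
    M.charpoly.eval x = (x • (1 : Matrix (Fin n) (Fin n) ℂ) - M).det := by
  rw [Matrix.charpoly, ← Polynomial.coe_evalRingHom, RingHom.map_det]
  congr 1
  ext i j
  by_cases h : i = j <;>
    simp [h, charmatrix_apply, Matrix.one_apply, Matrix.diagonal_apply, Matrix.sub_apply,
      Matrix.smul_apply]

private lemma jacobi_formula {n : ℕ} {M : ℝ → Matrix (Fin n) (Fin n) ℂ}
    {M' : Matrix (Fin n) (Fin n) ℂ} {t : ℝ}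
    (h : ∀ i j, HasDerivAt (fun s => M s i j) (M' i j) t) :
    HasDerivAt (fun s => (M s).det) (Matrix.trace ((M t).adjugate * M')) t := by
  have H : HasDerivAt (fun s => (M s).det)
      (∑ σ : Equiv.Perm (Fin n), ((Equiv.Perm.sign σ : ℤ) : ℂ) *
        ∑ i, (∏ j ∈ Finset.univ.erase i, M t (σ j) j) • M' (σ i) i) t := by
    have hdet : ∀ s, (M s).det
        = ∑ σ : Equiv.Perm (Fin n), ((Equiv.Perm.sign σ : ℤ) : ℂ) * ∏ i, M s (σ i) i :=
      fun s => Matrix.det_apply' _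
    simp only [hdet]
    exact HasDerivAt.fun_sum fun σ _ =>
      (HasDerivAt.fun_finsetProd (fun i _ => h (σ i) i)).const_mul _
  convert H using 1
  -- trace identity
  have col : ∀ i : Fin n, ((M t).adjugate * M') i i
      = ((M t).updateCol i fun a => M' a i).det := by
    intro i
    have : ((M t).adjugate * M') i i = ((M t).adjugate.mulVec fun a => M' a i) i := by
      simp [Matrix.mul_apply, Matrix.mulVec, dotProduct]
    rw [this, ← Matrix.cramer_eq_adjugate_mulVec, Matrix.cramer_apply]
  have expand : ∀ i : Fin n, ((M t).updateCol i fun a => M' a i).det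
      = ∑ σ : Equiv.Perm (Fin n), ((Equiv.Perm.sign σ : ℤ) : ℂ) *
          (M' (σ i) i * ∏ j ∈ Finset.univ.erase i, M t (σ j) j) := by
    intro i
    rw [Matrix.det_apply']
    refine Finset.sum_congr rfl fun σ _ => ?_
    congr 1
    rw [← Finset.mul_prod_erase _ _ (Finset.mem_univ i)]
    congr 1
    · simp [Matrix.updateCol_apply]
    · exact Finset.prod_congr rfl fun j hj => by
        simp [Matrix.updateCol_apply, (Finset.mem_erase.mp hj).1]
  unfold Matrix.trace
  simp only [Matrix.diag, col, expand]
  rw [Finset.sum_comm]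
  refine Finset.sum_congr rfl fun σ _ => ?_
  rw [Finset.mul_sum]
  refine Finset.sum_congr rfl fun i _ => ?_
  simp [smul_eq_mul]
  ring


/-- Along the symmetric Nahm flow, the characteristic polynomial of
`φ(z,t) = φ₀(t) + z φ₁(t) + z² φ₂(t)` is independent of `t`: its coefficients
are conserved quantities of Nahm's equations. -/
theorem nahm_charpoly_conserved {n : ℕ}
    (φ₀ φ₁ φ₂ : ℝ → Matrix (Fin n) (Fin n) ℂ)
    (hφ₀ : ∀ i j, Differentiable ℝ fun t => φ₀ t i j)
    (hφ₁ : ∀ i j, Differentiable ℝ fun t => φ₁ t i j)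
    (hφ₂ : ∀ i j, Differentiable ℝ fun t => φ₂ t i j)
    (h0 : ∀ t i j, deriv (fun s => φ₀ s i j) t
        = ((-(1/2) : ℂ) • (φ₁ t * φ₀ t - φ₀ t * φ₁ t)) i j)
    (h1 : ∀ t i j, deriv (fun s => φ₁ s i j) t
        = (φ₀ t * φ₂ t - φ₂ t * φ₀ t) i j)
    (h2 : ∀ t i j, deriv (fun s => φ₂ s i j) t
        = (((1/2) : ℂ) • (φ₁ t * φ₂ t - φ₂ t * φ₁ t)) i j) :
    ∀ z : ℂ, ∀ s t : ℝ,
      (φ₀ s + z • φ₁ s + z ^ 2 • φ₂ s).charpoly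
        = (φ₀ t + z • φ₁ t + z ^ 2 • φ₂ t).charpoly := by
  intro z s t
  set φ : ℝ → Matrix (Fin n) (Fin n) ℂ := fun u => φ₀ u + z • φ₁ u + z ^ 2 • φ₂ u with hφdef
  set A : ℝ → Matrix (Fin n) (Fin n) ℂ := fun u => ((1:ℂ)/2) • φ₁ u + z • φ₂ u with hAdef
  -- the Lax identity
  have key : ∀ u : ℝ,
      (-(1/2) : ℂ) • (φ₁ u * φ₀ u - φ₀ u * φ₁ u)
        + z • (φ₀ u * φ₂ u - φ₂ u * φ₀ u)
        + z ^ 2 • (((1/2) : ℂ) • (φ₁ u * φ₂ u - φ₂ u * φ₁ u))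
      = φ u * A u - A u * φ u := by
    intro u
    simp only [hφdef, hAdef, Matrix.add_mul, Matrix.mul_add, Matrix.smul_mul, Matrix.mul_smul,
      smul_smul, smul_sub]
    module
  have hderiv : ∀ u i j, HasDerivAt (fun v => φ v i j) ((φ u * A u - A u * φ u) i j) u := by
    intro u i j
    have d0 : HasDerivAt (fun v => φ₀ v i j)
        (((-(1/2) : ℂ) • (φ₁ u * φ₀ u - φ₀ u * φ₁ u)) i j) u := by
      rw [← h0 u i j]; exact ((hφ₀ i j) u).hasDerivAt
    have d1 : HasDerivAt (fun v => φ₁ v i j)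
        ((φ₀ u * φ₂ u - φ₂ u * φ₀ u) i j) u := by
      rw [← h1 u i j]; exact ((hφ₁ i j) u).hasDerivAt
    have d2 : HasDerivAt (fun v => φ₂ v i j)
        ((((1/2) : ℂ) • (φ₁ u * φ₂ u - φ₂ u * φ₁ u)) i j) u := by
      rw [← h2 u i j]; exact ((hφ₂ i j) u).hasDerivAt
    have := (d0.add (d1.const_mul z)).add ((d2.const_mul (z ^ 2)))
    have hfun : (fun v => φ v i j)
        = fun v => φ₀ v i j + z * φ₁ v i j + z ^ 2 * φ₂ v i j := by
      funext v; simp [hφdef]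
    rw [hfun]
    refine this.congr_deriv ?_
    rw [← key u]
    simp
  -- for every x, the determinant of x•1 - φ is conserved
  have hconst : ∀ x : ℂ, (x • (1 : Matrix (Fin n) (Fin n) ℂ) - φ s).det
      = (x • (1 : Matrix (Fin n) (Fin n) ℂ) - φ t).det := by
    intro x
    set N : ℝ → Matrix (Fin n) (Fin n) ℂ := fun u => x • 1 - φ u with hNdef
    have hN : ∀ u i j, HasDerivAt (fun v => N v i j)
        ((N u * A u - A u * N u) i j) u := by
      intro u i j
      have hfun : (fun v => N v i j) = fun v => (x • (1 : Matrix (Fin n) (Fin n) ℂ)) i j - φ v i j := by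
        funext v; simp [hNdef]
      have hval : (N u * A u - A u * N u) i j
          = (0 : ℂ) - (φ u * A u - A u * φ u) i j := by
        have : N u * A u - A u * N u = -(φ u * A u - A u * φ u) := by
          simp only [hNdef, Matrix.sub_mul, Matrix.mul_sub, Matrix.smul_mul, Matrix.mul_smul,
            Matrix.one_mul, Matrix.mul_one]
          abel
        rw [this]; simp
      rw [hfun, hval]
      exact (hasDerivAt_const _ _).sub (hderiv u i j)
    have hzero : ∀ u : ℝ, HasDerivAt (fun v => (N v).det) 0 u := by
      intro u
      have := jacobi_formula (hN u)
      have htr : Matrix.trace ((N u).adjugate * (N u * A u - A u * N u)) = 0 := by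
        rw [Matrix.mul_sub, Matrix.trace_sub, ← Matrix.mul_assoc, Matrix.adjugate_mul,
          ← Matrix.mul_assoc, Matrix.trace_mul_cycle, Matrix.mul_adjugate,
          sub_self]
      rwa [htr] at this
    exact is_const_of_deriv_eq_zero (fun u => (hzero u).differentiableAt)
      (fun u => (hzero u).deriv) s t
  apply Polynomial.funext
  intro x
  rw [eval_charpoly_aux, eval_charpoly_aux]
  exact hconst x
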